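/- Let t ≥ 2 and k ≥ 1 be integers, and let G be a finite simple graph on n vertices admitting a K_t-decomposition 𝒬 = {Q_1, …, Q_v} such that |Q_i ∩ Q_j| = 1 for all i ≠ j and every vertex of G lies in exactly k cliques of 𝒬. Then the characteristic polynomial of the adjacency matrix of G is (x − k(t−1))·(x − (t−1−k))^{v−1}·(x + k)^{n−v}; in particular, G is k(t−1)-regular and its eigenvalues are k(t−1) with multiplicity 1, t−1−k with multiplicity v−1, and −k with multiplicity n−v. -/

import Mathlib

open Finset SimpleGraph Polynomial
open Matrix

variable {V : Type*}

/-- A clique partition of `G`: a set of cliques of `G` such that every edge of `G`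
lies in exactly one of them. -/
def IsCliquePartition [DecidableEq V] (G : SimpleGraph V) (P : Finset (Finset V)) : Prop :=
  (∀ s ∈ P, G.IsClique (s : Set V)) ∧
    ∀ u v : V, G.Adj u v → ∃! s, s ∈ P ∧ u ∈ s ∧ v ∈ s

/-- The spectral radius of a finite graph: the largest eigenvalue of its adjacency matrix. -/
noncomputable def specRad [Fintype V] [DecidableEq V] (G : SimpleGraph V)
    [DecidableRel G.Adj] : ℝ :=
  sSup {μ : ℝ | Module.End.HasEigenvalue (Matrix.toLin' (G.adjMatrix ℝ)) μ}

/-- `cpT G t` : the minimum number of cliques in a clique partition of `G` in which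
every clique has at most `t` vertices. -/
noncomputable def cpT [DecidableEq V] (G : SimpleGraph V) (t : ℕ) : ℕ :=
  sInf {m | ∃ P : Finset (Finset V),
    IsCliquePartition G P ∧ (∀ s ∈ P, s.card ≤ t) ∧ P.card = m}

/-- `cp G` : the clique partition number of `G`. -/
noncomputable def cp [DecidableEq V] (G : SimpleGraph V) : ℕ :=
  sInf {m | ∃ P : Finset (Finset V), IsCliquePartition G P ∧ P.card = m}

section aux
variable {m n : Type*} [Fintype m] [Fintype n] [DecidableEq m] [DecidableEq n]

lemma my_eval_charpoly (M : Matrix n n ℝ) (x : ℝ) :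
    M.charpoly.eval x = (x • (1 : Matrix n n ℝ) - M).det := by
  rw [Matrix.charpoly, _root_.eval_det, Matrix.matPolyEquiv_charmatrix]
  congr 1
  rw [eval_sub, eval_X, eval_C, Matrix.scalar_apply, ← Matrix.smul_one_eq_diagonal]

lemma my_det_sub_self (N : Matrix m n ℝ) {y : ℝ} (hy : y ≠ 0)
    (h : Fintype.card n ≤ Fintype.card m) :
    (y • (1 : Matrix m m ℝ) - N * Nᵀ).det
      = y ^ (Fintype.card m - Fintype.card n) * (y • (1 : Matrix n n ℝ) - Nᵀ * N).det := by
  have h1 : y • (1 : Matrix m m ℝ) - N * Nᵀ = y • ((1 : Matrix m m ℝ) - (y⁻¹ • N) * Nᵀ) := by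
    rw [smul_sub, Matrix.smul_mul, smul_smul, mul_inv_cancel₀ hy, one_smul]
  have h2 : y • (1 : Matrix n n ℝ) - Nᵀ * N = y • ((1 : Matrix n n ℝ) - Nᵀ * (y⁻¹ • N)) := by
    rw [smul_sub, Matrix.mul_smul, smul_smul, mul_inv_cancel₀ hy, one_smul]
  rw [h1, h2, Matrix.det_smul, Matrix.det_smul, Matrix.det_one_sub_mul_comm,
    ← mul_assoc, ← pow_add, Nat.sub_add_cancel h]

lemma my_det_sub_allOnes {c : ℝ} (hc : c ≠ 0) (hpos : 0 < Fintype.card n) :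
    (c • (1 : Matrix n n ℝ) - Matrix.of (fun _ _ => (1:ℝ))).det
      = c ^ (Fintype.card n - 1) * (c - Fintype.card n) := by
  have hJ : (Matrix.of (fun _ _ => (1:ℝ)) : Matrix n n ℝ)
      = Matrix.replicateCol Unit (fun _ => (1:ℝ)) * Matrix.replicateRow Unit (fun _ => (1:ℝ)) := by
    ext i j; simp [Matrix.mul_apply]
  have h1 : c • (1 : Matrix n n ℝ) - Matrix.of (fun _ _ => (1:ℝ))
      = c • ((1 : Matrix n n ℝ)
        - (c⁻¹ • Matrix.replicateCol Unit (fun _ => (1:ℝ))) * Matrix.replicateRow Unit (fun _ => (1:ℝ))) := by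
    rw [smul_sub, Matrix.smul_mul, smul_smul, mul_inv_cancel₀ hc, one_smul, hJ]
  rw [h1, Matrix.det_smul, Matrix.det_one_sub_mul_comm, Matrix.det_unique,
    Matrix.sub_apply, Matrix.one_apply_eq, Matrix.mul_apply]
  simp only [Matrix.replicateRow_apply, Matrix.smul_apply, Matrix.replicateCol_apply, smul_eq_mul, mul_one,
    one_mul, Finset.sum_const, Finset.card_univ, nsmul_eq_mul]
  have h3 : c ^ Fintype.card n = c ^ (Fintype.card n - 1) * c := by
    rw [← pow_succ, Nat.sub_add_cancel hpos]
  rw [h3]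
  field_simp

end aux

/-- If `G` (on `n ≥ 1` vertices) has a `K_t`-decomposition
`𝒬 = {Q_1,…,Q_v}` with `|Q_i ∩ Q_j| = 1` for `i ≠ j` in which every vertex lies in
exactly `k` cliques, then the characteristic polynomial of the adjacency matrix of `G`
is `(x − k(t−1))·(x − (t−1−k))^{v−1}·(x + k)^{n−v}`; in particular `G` is
`k(t−1)`-regular. -/
theorem charpoly_of_decomposition [Fintype V] [DecidableEq V] (G : SimpleGraph V)
    [DecidableRel G.Adj] (t k : ℕ) (ht : 2 ≤ t) (hk : 1 ≤ k)
    (hn : 0 < Fintype.card V)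
    (P : Finset (Finset V)) (hP : IsCliquePartition G P)
    (hcard : ∀ s ∈ P, s.card = t)
    (hint : ∀ s₁ ∈ P, ∀ s₂ ∈ P, s₁ ≠ s₂ → (s₁ ∩ s₂).card = 1)
    (hreg : ∀ u : V, (P.filter (fun s => u ∈ s)).card = k) :
    (G.adjMatrix ℝ).charpoly =
        (Polynomial.X - Polynomial.C ((k : ℝ) * ((t : ℝ) - 1))) *
          (Polynomial.X - Polynomial.C ((t : ℝ) - 1 - (k : ℝ))) ^ (P.card - 1) *
          (Polynomial.X + Polynomial.C (k : ℝ)) ^ (Fintype.card V - P.card) ∧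
      G.IsRegularOfDegree (k * (t - 1)) := by
  classical
  obtain ⟨u0⟩ := Fintype.card_pos_iff.mp hn
  have hPne : P.Nonempty := by
    have h1 : (P.filter (fun s => u0 ∈ s)).Nonempty := by
      rw [← Finset.card_pos, hreg u0]; omega
    exact h1.mono (Finset.filter_subset _ _)
  have hvpos : 0 < P.card := Finset.card_pos.mpr hPne
  -- exactly one clique through two distinct vertices (when adjacent),
  -- none when non-adjacent
  have hfilt : ∀ u w : V, (P.filter (fun s => u ∈ s ∧ w ∈ s)).card
      = if u = w then k else if G.Adj u w then 1 else 0 := by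
    intro u w
    by_cases huw : u = w
    · subst huw
      simp only [and_self, if_pos rfl]
      exact hreg u
    · rw [if_neg huw]
      by_cases hA : G.Adj u w
      · rw [if_pos hA, Finset.card_eq_one]
        obtain ⟨s, hs, huniq⟩ := hP.2 u w hA
        refine ⟨s, ?_⟩
        ext s'
        simp only [Finset.mem_filter, Finset.mem_singleton]
        constructor
        · rintro ⟨h1, h2, h3⟩; exact huniq s' ⟨h1, h2, h3⟩
        · rintro rfl; exact ⟨hs.1, hs.2.1, hs.2.2⟩
      · rw [if_neg hA, Finset.card_eq_zero, Finset.filter_eq_empty_iff]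
        rintro s hsP ⟨hus, hws⟩
        exact hA (hP.1 s hsP hus hws huw)
  -- the incidence matrix
  set N : Matrix V {s // s ∈ P} ℝ :=
    Matrix.of (fun u s => if u ∈ (s : Finset V) then 1 else 0) with hN
  have hcardP : Fintype.card {s // s ∈ P} = P.card := Fintype.card_coe P
  have hNNT : N * Nᵀ = G.adjMatrix ℝ + (k : ℝ) • (1 : Matrix V V ℝ) := by
    ext u w
    rw [Matrix.mul_apply]
    have e1 : ∀ s : {s // s ∈ P}, N u s * Nᵀ s w
        = if u ∈ (s : Finset V) ∧ w ∈ (s : Finset V) then (1:ℝ) else 0 := by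
      intro s
      rw [Matrix.transpose_apply, hN]
      simp only [Matrix.of_apply]
      split_ifs with h1 h2 h3 h4 <;> simp_all
    rw [Finset.sum_congr rfl (fun s _ => e1 s)]
    rw [Finset.sum_coe_sort P (fun s => if u ∈ s ∧ w ∈ s then (1:ℝ) else 0)]
    rw [Finset.sum_boole, hfilt u w]
    by_cases huw : u = w
    · subst huw
      simp [G.adjMatrix_apply, Matrix.one_apply]
    · simp only [if_neg huw, Matrix.add_apply, G.adjMatrix_apply, Matrix.smul_apply,
        Matrix.one_apply_ne huw, smul_eq_mul, mul_zero, add_zero]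
      split_ifs <;> simp
  have hNTN : Nᵀ * N = ((t:ℝ) - 1) • (1 : Matrix {s // s ∈ P} {s // s ∈ P} ℝ)
      + Matrix.of (fun _ _ => (1:ℝ)) := by
    ext s s'
    rw [Matrix.mul_apply]
    have e1 : ∀ u : V, Nᵀ s u * N u s'
        = if u ∈ (s : Finset V) ∩ (s' : Finset V) then (1:ℝ) else 0 := by
      intro u
      rw [Matrix.transpose_apply, hN]
      simp only [Matrix.of_apply, Finset.mem_inter]
      split_ifs with h1 h2 h3 h4 <;> simp_all
    rw [Finset.sum_congr rfl (fun u _ => e1 u), Finset.sum_boole]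
    rw [Finset.filter_univ_mem]
    by_cases hss : s = s'
    · subst hss
      rw [Finset.inter_self, hcard s.1 s.2]
      simp [Matrix.one_apply]
    · have : ((s : Finset V) ∩ (s' : Finset V)).card = 1 :=
        hint s.1 s.2 s'.1 s'.2 (fun h => hss (Subtype.ext h))
      rw [this]
      simp [Matrix.one_apply, Subtype.ext_iff, hss, Matrix.one_apply_ne]
  -- counting: P.card - 1 = t * (k - 1)
  obtain ⟨Q0, hQ0⟩ := hPne
  have hcount : P.card - 1 = t * (k - 1) := by
    have h1 : (P.erase Q0).card = ∑ s ∈ P.erase Q0, (s ∩ Q0).card := by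
      rw [Finset.card_eq_sum_ones]
      refine Finset.sum_congr rfl fun s hs => ?_
      rw [hint s (Finset.mem_of_mem_erase hs) Q0 hQ0 (Finset.ne_of_mem_erase hs)]
    have h2 : ∀ s ∈ P.erase Q0, (s ∩ Q0).card = ∑ x ∈ Q0, if x ∈ s then 1 else 0 := by
      intro s _
      rw [Finset.sum_boole]
      · congr 1
        ext x
        simp [Finset.mem_inter, Finset.mem_filter, and_comm]
    have h3 : ∀ x ∈ Q0, ((P.erase Q0).filter (fun s => x ∈ s)).card = k - 1 := by
      intro x hx
      rw [Finset.filter_erase, Finset.card_erase_of_mem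
        (Finset.mem_filter.mpr ⟨hQ0, hx⟩), hreg x]
    calc P.card - 1 = (P.erase Q0).card := by rw [Finset.card_erase_of_mem hQ0]
      _ = ∑ s ∈ P.erase Q0, ∑ x ∈ Q0, if x ∈ s then 1 else 0 := by
          rw [h1]; exact Finset.sum_congr rfl h2
      _ = ∑ x ∈ Q0, ∑ s ∈ P.erase Q0, if x ∈ s then 1 else 0 := Finset.sum_comm
      _ = ∑ x ∈ Q0, ((P.erase Q0).filter (fun s => x ∈ s)).card := by
          refine Finset.sum_congr rfl fun x _ => ?_
          rw [Finset.sum_boole, Nat.cast_id]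
      _ = ∑ x ∈ Q0, (k - 1) := Finset.sum_congr rfl h3
      _ = t * (k - 1) := by rw [Finset.sum_const, smul_eq_mul, hcard Q0 hQ0]
  have hvR : (P.card : ℝ) = (t : ℝ) * ((k : ℝ) - 1) + 1 := by
    have : P.card = t * (k - 1) + 1 := by omega
    rw [this]
    push_cast [Nat.cast_sub hk]
    ring
  -- rank argument: P.card ≤ Fintype.card V
  have ht1 : (1:ℝ) ≤ (t:ℝ) - 1 := by
    have : (2:ℝ) ≤ (t:ℝ) := by exact_mod_cast ht
    linarith
  have hcnz : -((t:ℝ) - 1) ≠ 0 := by intro h; linarith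
  have hPpos' : 0 < Fintype.card {s // s ∈ P} := by rw [hcardP]; exact hvpos
  have hneg : Nᵀ * N = -((-((t:ℝ) - 1)) • (1 : Matrix {s // s ∈ P} {s // s ∈ P} ℝ)
      - Matrix.of fun _ _ => (1:ℝ)) := by
    rw [hNTN, neg_sub, neg_smul, sub_neg_eq_add, add_comm]
  have hdet : (Nᵀ * N).det ≠ 0 := by
    rw [hneg, Matrix.det_neg, my_det_sub_allOnes hcnz hPpos', hcardP]
    have hvnn : (0:ℝ) ≤ (P.card : ℝ) := Nat.cast_nonneg _
    refine mul_ne_zero (pow_ne_zero _ (by norm_num))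
      (mul_ne_zero (pow_ne_zero _ hcnz) ?_)
    intro h
    linarith
  have hvle : P.card ≤ Fintype.card V := by
    have hr1 : (Nᵀ * N).rank = Fintype.card {s // s ∈ P} :=
      Matrix.rank_of_isUnit _ ((Matrix.isUnit_iff_isUnit_det _).mpr
        (isUnit_iff_ne_zero.mpr hdet))
    have hr2 := Matrix.rank_transpose_mul_self N
    have hr3 := Matrix.rank_le_card_height N
    rw [hcardP] at hr1
    omega
  -- main evaluation identity
  have key : ∀ x : ℝ, x ≠ -(k:ℝ) → x ≠ (t:ℝ) - 1 - (k:ℝ) →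
      eval x ((G.adjMatrix ℝ).charpoly) =
      eval x ((Polynomial.X - Polynomial.C ((k : ℝ) * ((t : ℝ) - 1))) *
          (Polynomial.X - Polynomial.C ((t : ℝ) - 1 - (k : ℝ))) ^ (P.card - 1) *
          (Polynomial.X + Polynomial.C (k : ℝ)) ^ (Fintype.card V - P.card)) := by
    intro x hx1 hx2
    have hy : x + (k:ℝ) ≠ 0 := fun h => hx1 (by linarith)
    have hc : x + (k:ℝ) - ((t:ℝ) - 1) ≠ 0 := fun h => hx2 (by linarith)
    rw [my_eval_charpoly]
    have hA : x • (1 : Matrix V V ℝ) - G.adjMatrix ℝ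
        = (x + (k:ℝ)) • (1 : Matrix V V ℝ) - N * Nᵀ := by
      rw [hNNT, add_smul]
      abel
    rw [hA, my_det_sub_self N hy (by rw [hcardP]; exact hvle), hNTN]
    have hB : (x + (k:ℝ)) • (1 : Matrix {s // s ∈ P} {s // s ∈ P} ℝ)
        - (((t:ℝ) - 1) • 1 + Matrix.of fun _ _ => (1:ℝ))
        = (x + (k:ℝ) - ((t:ℝ) - 1)) • 1 - Matrix.of fun _ _ => (1:ℝ) := by
      module
    rw [hB, my_det_sub_allOnes hc hPpos', hcardP]
    simp only [eval_mul, eval_pow, eval_sub, eval_add, eval_X, eval_C]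
    rw [hvR]
    ring
  constructor
  · have h1 : ({-(k:ℝ), (t:ℝ) - 1 - (k:ℝ)} : Set ℝ).Finite :=
      (Set.finite_singleton _).insert _
    refine Polynomial.eq_of_infinite_eval_eq _ _ (h1.infinite_compl.mono ?_)
    intro x hx
    simp only [Set.mem_compl_iff, Set.mem_insert_iff, Set.mem_singleton_iff, not_or] at hx
    exact key x hx.1 hx.2
  · intro u
    have hnb : G.neighborFinset u
        = (P.filter (fun s => u ∈ s)).biUnion (fun s => s.erase u) := by
      ext w
      simp only [mem_neighborFinset, Finset.mem_biUnion, Finset.mem_filter,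
        Finset.mem_erase]
      constructor
      · intro hadj
        obtain ⟨s, hs, _⟩ := hP.2 u w hadj
        exact ⟨s, ⟨hs.1, hs.2.1⟩, hadj.ne', hs.2.2⟩
      · rintro ⟨s, ⟨hsP, hus⟩, hne, hws⟩
        exact hP.1 s hsP hus hws (Ne.symm hne)
    have hdisj : ∀ s ∈ P.filter (fun s => u ∈ s), ∀ s' ∈ P.filter (fun s => u ∈ s),
        s ≠ s' → Disjoint (s.erase u) (s'.erase u) := by
      intro s hs s' hs' hne
      rw [Finset.disjoint_left]
      intro w hw hw'
      obtain ⟨hwne, hws⟩ := Finset.mem_erase.mp hw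
      obtain ⟨_, hws'⟩ := Finset.mem_erase.mp hw'
      obtain ⟨hsP, hus⟩ := Finset.mem_filter.mp hs
      obtain ⟨hsP', hus'⟩ := Finset.mem_filter.mp hs'
      obtain ⟨a, ha⟩ := Finset.card_eq_one.mp (hint s hsP s' hsP' hne)
      have h1 : u = a := Finset.mem_singleton.mp
        (ha ▸ Finset.mem_inter.mpr ⟨hus, hus'⟩)
      have h2 : w = a := Finset.mem_singleton.mp
        (ha ▸ Finset.mem_inter.mpr ⟨hws, hws'⟩)
      exact hwne (h2.trans h1.symm)
    have hdeg : G.degree u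
        = ((P.filter (fun s => u ∈ s)).biUnion (fun s => s.erase u)).card := by
      rw [← hnb]
      rfl
    rw [hdeg, Finset.card_biUnion hdisj]
    calc ∑ s ∈ P.filter (fun s => u ∈ s), (s.erase u).card
        = ∑ s ∈ P.filter (fun s => u ∈ s), (t - 1) := by
          refine Finset.sum_congr rfl fun s hs => ?_
          obtain ⟨hsP, hus⟩ := Finset.mem_filter.mp hs
          rw [Finset.card_erase_of_mem hus, hcard s hsP]
      _ = k * (t - 1) := by rw [Finset.sum_const, smul_eq_mul, hreg u]
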